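/- Let k ≥ 1 and let m₁, m₂ be integers with 1 ≤ m₁, m₂ ≤ k+1 and gcd(m₁, k+2) = gcd(m₂, k+2) = 1. Then the real algebraic numbers δ₁ := 2cos(m₁π/(k+2)) and δ₂ := 2cos(m₂π/(k+2)) have the same minimal polynomial over ℚ if and only if k is even, or k is odd and m₁ ≡ m₂ (mod 2). (Hence the monoidal categories C_{k,m}, whose complete invariant is δ = 2cos(mπ/(k+2)), form a single Galois orbit when k is even and exactly two Galois orbits, distinguished by the parity of m, when k is odd.) -/

import Mathlib

open Polynomial Real

-- `2 cos θ` as `z + z⁻¹` for `z = exp (θ I)`.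
lemma exp_add_inv_eq (θ : ℝ) :
    Complex.exp (θ * Complex.I) + (Complex.exp (θ * Complex.I))⁻¹ =
      ((2 * Real.cos θ : ℝ) : ℂ) := by
  rw [← Complex.exp_neg]
  push_cast
  rw [Complex.two_cos, neg_mul]

-- Lemma A: same order primitive roots give equal minpoly of `z+z⁻¹`.
lemma minpoly_add_inv_eq {n : ℕ} (hn : 0 < n) {u v : ℂ}
    (hu : IsPrimitiveRoot u n) (hv : IsPrimitiveRoot v n) :
    minpoly ℚ (u + u⁻¹) = minpoly ℚ (v + v⁻¹) := by
  have hirr : Irreducible (cyclotomic n ℚ) := cyclotomic.irreducible_rat hn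
  have : Fact (Irreducible (cyclotomic n ℚ)) := ⟨hirr⟩
  have haeval : ∀ w : ℂ, IsPrimitiveRoot w n → aeval w (cyclotomic n ℚ) = 0 := by
    intro w hw
    rw [aeval_def, ← eval_map, map_cyclotomic]
    exact hw.isRoot_cyclotomic hn
  set K := AdjoinRoot (cyclotomic n ℚ)
  let φu : K →ₐ[ℚ] ℂ := AdjoinRoot.liftAlgHom _ (Algebra.ofId ℚ ℂ) u
    (by rw [Algebra.toRingHom_ofId, ← aeval_def]; exact haeval u hu)
  let φv : K →ₐ[ℚ] ℂ := AdjoinRoot.liftAlgHom _ (Algebra.ofId ℚ ℂ) v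
    (by rw [Algebra.toRingHom_ofId, ← aeval_def]; exact haeval v hv)
  let x : K := AdjoinRoot.root _ + (AdjoinRoot.root _)⁻¹
  have hφu : φu x = u + u⁻¹ := by
    have hr : φu (AdjoinRoot.root (cyclotomic n ℚ)) = u := AdjoinRoot.liftAlgHom_root _ _ _ _
    simp only [x, map_add, map_inv₀, hr]
  have hφv : φv x = v + v⁻¹ := by
    have hr : φv (AdjoinRoot.root (cyclotomic n ℚ)) = v := AdjoinRoot.liftAlgHom_root _ _ _ _
    simp only [x, map_add, map_inv₀, hr]
  rw [← hφu, ← hφv, minpoly.algHom_eq φu (RingHom.injective (φu : K →+* ℂ)) x,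
    minpoly.algHom_eq φv (RingHom.injective (φv : K →+* ℂ)) x]

-- Lemma B: for odd n, values `u+u⁻¹` and `-(v+v⁻¹)` never coincide.
lemma add_inv_ne_neg {n : ℕ} (hodd : Odd n) (hn0 : n ≠ 0) {u v : ℂ}
    (hu : IsPrimitiveRoot u n) (hv : IsPrimitiveRoot v n) :
    u + u⁻¹ ≠ -(v + v⁻¹) := by
  obtain ⟨a, ha, hac, rfl⟩ := (Complex.isPrimitiveRoot_iff u n hn0).1 hu
  obtain ⟨b, hb, hbc, rfl⟩ := (Complex.isPrimitiveRoot_iff v n hn0).1 hv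
  have hn' : (n : ℝ) ≠ 0 := by exact_mod_cast hn0
  have harg : ∀ c : ℕ, (2 * π * Complex.I * ((c : ℂ) / (n : ℂ))) =
      ((2 * π * c / n : ℝ) : ℂ) * Complex.I := by
    intro c; push_cast; ring
  rw [harg a, harg b, exp_add_inv_eq, exp_add_inv_eq]
  intro h
  have h' : 2 * Real.cos (2 * π * a / n) = -(2 * Real.cos (2 * π * b / n)) := by
    exact_mod_cast h
  have hcos : Real.cos (2 * π * a / n) = Real.cos (π - 2 * π * b / n) := by
    rw [Real.cos_pi_sub]; linarith
  rw [Real.cos_eq_cos_iff] at hcos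
  obtain ⟨j, hj | hj⟩ := hcos
  · field_simp at hj
    have h2 : π * ((n : ℝ)) = π * (2 * (j * n + a + b)) := by linear_combination π * hj
    have h3 : ((n : ℝ)) = 2 * (j * n + a + b) := mul_left_cancel₀ Real.pi_ne_zero h2
    have h4 : (n : ℤ) = 2 * (j * n + a + b) := by exact_mod_cast h3
    have h5 : Even (n : ℤ) := ⟨j * n + a + b, by linarith⟩
    rw [Int.even_coe_nat] at h5
    exact (Nat.not_even_iff_odd.mpr hodd) h5
  · field_simp at hj
    have h2 : π * ((n : ℝ)) = π * (2 * (j * n - a + b)) := by linear_combination π * hj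
    have h3 : ((n : ℝ)) = 2 * (j * n - a + b) := mul_left_cancel₀ Real.pi_ne_zero h2
    have h4 : (n : ℤ) = 2 * (j * n - a + b) := by exact_mod_cast h3
    have h5 : Even (n : ℤ) := ⟨j * n - a + b, by linarith⟩
    rw [Int.even_coe_nat] at h5
    exact (Nat.not_even_iff_odd.mpr hodd) h5

open IntermediateField in
-- Lemma B': for odd n, `u+u⁻¹` and `-(w+w⁻¹)` are not Galois conjugate.
lemma minpoly_ne_neg {n : ℕ} (hodd : Odd n) (hn0 : n ≠ 0) {u w : ℂ}
    (hu : IsPrimitiveRoot u n) (hw : IsPrimitiveRoot w n) :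
    minpoly ℚ (u + u⁻¹) ≠ minpoly ℚ (-(w + w⁻¹)) := by
  intro h
  have hn : 0 < n := Nat.pos_of_ne_zero hn0
  have haeval : aeval u (cyclotomic n ℚ) = 0 := by
    rw [aeval_def, ← eval_map, map_cyclotomic]; exact hu.isRoot_cyclotomic hn
  have hui : IsIntegral ℚ u :=
    ⟨cyclotomic n ℚ, cyclotomic.monic n ℚ, by rw [← aeval_def]; exact haeval⟩
  have hfd : FiniteDimensional ℚ ℚ⟮u⟯ := IntermediateField.adjoin.finiteDimensional hui
  have halg : Algebra.IsAlgebraic ℚ ℚ⟮u⟯ := Algebra.IsAlgebraic.of_finite ℚ _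
  set g : ℚ⟮u⟯ := AdjoinSimple.gen ℚ u with hgdef
  set x : ℚ⟮u⟯ := g + g⁻¹ with hxdef
  have hx : (algebraMap ℚ⟮u⟯ ℂ) x = u + u⁻¹ := by
    rw [hxdef, map_add, map_inv₀, AdjoinSimple.algebraMap_gen]
  have hminx : minpoly ℚ x = minpoly ℚ (u + u⁻¹) := by
    rw [← hx, minpoly.algebraMap_eq (algebraMap ℚ⟮u⟯ ℂ).injective]
  have hxint : IsIntegral ℚ x := IsIntegral.of_finite ℚ x
  have hzroot : -(w + w⁻¹) ∈ (minpoly ℚ x).rootSet ℂ := by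
    rw [Polynomial.mem_rootSet]
    exact ⟨minpoly.ne_zero hxint, by rw [hminx, h]; exact minpoly.aeval ℚ _⟩
  rw [← Algebra.IsAlgebraic.range_eval_eq_rootSet_minpoly ℂ x] at hzroot
  obtain ⟨ψ, hψ⟩ := hzroot
  set v : ℂ := ψ g with hvdef
  have hψ' : ψ x = -(w + w⁻¹) := hψ
  have hgroot : aeval g (cyclotomic n ℚ) = 0 := by
    apply (algebraMap ℚ⟮u⟯ ℂ).injective
    rw [map_zero, ← Polynomial.aeval_algebraMap_apply, AdjoinSimple.algebraMap_gen]
    exact haeval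
  have hvroot : aeval v (cyclotomic n ℚ) = 0 := by
    rw [hvdef, Polynomial.aeval_algHom_apply, hgroot, map_zero]
  have : NeZero ((n : ℕ) : ℂ) := ⟨Nat.cast_ne_zero.mpr hn0⟩
  have hv : IsPrimitiveRoot v n := by
    rw [← Polynomial.isRoot_cyclotomic_iff (R := ℂ) (n := n)]
    rwa [aeval_def, ← eval_map, map_cyclotomic] at hvroot
  have hψx : ψ x = v + v⁻¹ := by rw [hxdef, map_add, map_inv₀]
  exact add_inv_ne_neg hodd hn0 hv hw (by rw [← hψx]; exact hψ')

-- For odd `n`, the negative of a primitive `2n`-th root is a primitive `n`-th root.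
lemma isPrimitiveRoot_neg_of_odd {n : ℕ} (hodd : Odd n) (hn0 : n ≠ 0) {z : ℂ}
    (hz : IsPrimitiveRoot z (2 * n)) : IsPrimitiveRoot (-z) n := by
  have hzn : z ^ n = -1 := by
    have h2 : z ^ (2 * n) = 1 := hz.pow_eq_one
    have h1 : (z ^ n - 1) * (z ^ n + 1) = 0 := by
      rw [two_mul, pow_add] at h2; linear_combination h2
    rcases mul_eq_zero.1 h1 with h | h
    · exfalso
      have := Nat.le_of_dvd (Nat.pos_of_ne_zero hn0) (hz.dvd_of_pow_eq_one n (by linear_combination h))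
      omega
    · linear_combination h
  constructor
  · rw [Odd.neg_pow hodd, hzn, neg_neg]
  · intro l hl
    have h2 : z ^ (2 * l) = 1 := by
      rw [← Even.neg_pow (even_two_mul l), two_mul, pow_add, hl, one_mul]
    obtain ⟨c, hc⟩ := hz.dvd_of_pow_eq_one _ h2
    refine ⟨c, Nat.eq_of_mul_eq_mul_left two_pos ?_⟩
    rw [hc]; ring

/-- For `k ≥ 1` and `1 ≤ m₁, m₂ ≤ k+1` both coprime to `k+2`, the complete invariants
`δᵢ = 2cos(mᵢπ/(k+2))` have the same minimal polynomial over `ℚ` (i.e. `C_{k,m₁}` and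
`C_{k,m₂}` are Galois conjugate) iff `k` is even, or `k` is odd and `m₁ ≡ m₂ (mod 2)`. -/
theorem stmt4 (k : ℕ) (hk : 1 ≤ k) (m₁ m₂ : ℕ)
    (hm₁ : 1 ≤ m₁) (hm₁' : m₁ ≤ k + 1) (hm₂ : 1 ≤ m₂) (hm₂' : m₂ ≤ k + 1)
    (hc₁ : Nat.gcd m₁ (k + 2) = 1) (hc₂ : Nat.gcd m₂ (k + 2) = 1) :
    minpoly ℚ (2 * Real.cos ((m₁ : ℝ) * Real.pi / ((k : ℝ) + 2))) =
        minpoly ℚ (2 * Real.cos ((m₂ : ℝ) * Real.pi / ((k : ℝ) + 2))) ↔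
      Even k ∨ (Odd k ∧ m₁ ≡ m₂ [MOD 2]) := by
  set n : ℕ := k + 2 with hndef
  clear_value n
  have hn0 : n ≠ 0 := by omega
  have hnR0 : (n : ℝ) ≠ 0 := Nat.cast_ne_zero.mpr hn0
  have hnC0 : (n : ℂ) ≠ 0 := Nat.cast_ne_zero.mpr hn0
  set E : ℕ → ℂ := fun m => Complex.exp ((((m : ℝ) * π / (n : ℝ)) : ℝ) * Complex.I) with hEdef
  -- reduce the real minpoly equation to a complex one
  have hRC : ∀ m : ℕ, minpoly ℚ (2 * Real.cos ((m : ℝ) * π / ((k : ℝ) + 2))) =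
      minpoly ℚ (E m + (E m)⁻¹) := by
    intro m
    have h1 : ((k : ℝ) + 2) = (n : ℝ) := by rw [hndef]; push_cast; ring
    rw [h1, ← minpoly.algebraMap_eq (algebraMap ℝ ℂ).injective
      (2 * Real.cos ((m : ℝ) * π / (n : ℝ)))]
    congr 1
    rw [hEdef, exp_add_inv_eq]
    norm_cast
  -- primitive root descriptions
  have prim_odd : ∀ m : ℕ, Nat.gcd m n = 1 → Odd m → IsPrimitiveRoot (E m) (2 * n) := by
    intro m hg hodd
    have hco : m.Coprime (2 * n) :=
      Nat.Coprime.mul_right (Nat.coprime_two_right.mpr hodd) hg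
    have h := Complex.isPrimitiveRoot_exp_of_coprime m (2 * n) (by omega) hco
    have harg : 2 * (π : ℂ) * Complex.I * ((m : ℂ) / ((2 * n : ℕ) : ℂ)) =
        ((((m : ℝ) * π / (n : ℝ)) : ℝ) : ℂ) * Complex.I := by
      push_cast
      field_simp [hnC0]
    rwa [harg] at h
  have prim_even : ∀ m : ℕ, Nat.gcd m n = 1 → Even m → IsPrimitiveRoot (E m) n := by
    intro m hg hme
    obtain ⟨m', hm'⟩ := hme
    have hco : m'.Coprime n := Nat.Coprime.coprime_dvd_left ⟨2, by omega⟩ hg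
    have h := Complex.isPrimitiveRoot_exp_of_coprime m' n hn0 hco
    have harg : 2 * (π : ℂ) * Complex.I * ((m' : ℂ) / ((n : ℕ) : ℂ)) =
        ((((m : ℝ) * π / (n : ℝ)) : ℝ) : ℂ) * Complex.I := by
      have : (m : ℂ) = 2 * (m' : ℂ) := by
        have : m = 2 * m' := by omega
        rw [this]; push_cast; ring
      push_cast
      rw [this]
      field_simp [hnC0]
    rwa [harg] at h
  -- negative representation for odd m
  have neg_rep : ∀ m : ℕ, E m + (E m)⁻¹ = -((-(E m)) + (-(E m))⁻¹) := by
    intro m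
    rw [inv_neg]
    ring
  rw [hRC m₁, hRC m₂]
  constructor
  · -- forward: contrapositive
    intro hEq
    by_contra hR
    push_neg at hR
    obtain ⟨hko', hpar'⟩ := hR
    have hko : Odd k := Nat.not_even_iff_odd.mp hko'
    have hpar : ¬ m₁ ≡ m₂ [MOD 2] := hpar' hko
    have hno : Odd n := by
      obtain ⟨c, hc⟩ := hko
      exact ⟨c + 1, by omega⟩
    rw [Nat.ModEq] at hpar
    rcases Nat.even_or_odd m₁ with h₁ | h₁
    · -- m₁ even, m₂ odd
      have h₂ : Odd m₂ := by
        rcases Nat.even_or_odd m₂ with h | h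
        · exfalso; apply hpar
          obtain ⟨a, ha⟩ := h₁; obtain ⟨b, hb⟩ := h; omega
        · exact h
      have hu := prim_even m₁ hc₁ h₁
      have hw := isPrimitiveRoot_neg_of_odd hno hn0 (prim_odd m₂ hc₂ h₂)
      exact minpoly_ne_neg hno hn0 hu hw (by rw [hEq, neg_rep m₂])
    · -- m₁ odd, m₂ even
      have h₂ : Even m₂ := by
        rcases Nat.even_or_odd m₂ with h | h
        · exact h
        · exfalso; apply hpar
          obtain ⟨a, ha⟩ := h₁; obtain ⟨b, hb⟩ := h; omega
      have hu := prim_even m₂ hc₂ h₂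
      have hw := isPrimitiveRoot_neg_of_odd hno hn0 (prim_odd m₁ hc₁ h₁)
      exact minpoly_ne_neg hno hn0 hu hw (by rw [← hEq, neg_rep m₁])
  · -- backward
    intro hR
    rcases hR with hke | ⟨hko, hpar⟩
    · -- k even : n even, both m odd
      have hne : Even n := by obtain ⟨c, hc⟩ := hke; exact ⟨c + 1, by omega⟩
      have hodd : ∀ m : ℕ, Nat.gcd m n = 1 → Odd m := by
        intro m hg
        rcases Nat.even_or_odd m with h | h
        · exfalso
          have h2 : (2 : ℕ) ∣ Nat.gcd m n :=
            Nat.dvd_gcd h.two_dvd hne.two_dvd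
          rw [hg] at h2
          omega
        · exact h
      exact minpoly_add_inv_eq (by omega) (prim_odd m₁ hc₁ (hodd m₁ hc₁))
        (prim_odd m₂ hc₂ (hodd m₂ hc₂))
    · rcases Nat.even_or_odd m₁ with h₁ | h₁
      · have h₂ : Even m₂ := by
          rw [Nat.ModEq] at hpar
          rcases Nat.even_or_odd m₂ with h | h
          · exact h
          · exfalso; obtain ⟨a, ha⟩ := h₁; obtain ⟨b, hb⟩ := h; omega
        exact minpoly_add_inv_eq (Nat.pos_of_ne_zero hn0) (prim_even m₁ hc₁ h₁)
          (prim_even m₂ hc₂ h₂)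
      · have h₂ : Odd m₂ := by
          rw [Nat.ModEq] at hpar
          rcases Nat.even_or_odd m₂ with h | h
          · exfalso; obtain ⟨a, ha⟩ := h₁; obtain ⟨b, hb⟩ := h; omega
          · exact h
        exact minpoly_add_inv_eq (by omega) (prim_odd m₁ hc₁ h₁) (prim_odd m₂ hc₂ h₂)
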